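/- Let (g,[·,·],α,ε) be a color Hom-Lie algebra with a representation ρ on (M,β), and let ρ̃: g → End(M*) be defined by ρ̃(x)(f) = −ε(x,f) f∘ρ(x), with β̃(f) = f∘β. Then ρ̃ is a representation of g on (M*,β̃) if and only if ρ(x)∘ρ(α(y)) − ε(x,y)ρ(y)∘ρ(α(x)) = β∘ρ([x,y]) for all homogeneous x,y ∈ g. -/
import Mathlib


variable {K : Type*} [Field K] {Γ : Type*} [AddCommGroup Γ]
variable {V : Type*} [AddCommGroup V] [Module K V]

/-- `ε` is a bicharacter on the abelian group `Γ` with values in `K`. -/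
def IsBicharacter (ε : Γ → Γ → K) : Prop :=
  (∀ a b, ε a b * ε b a = 1) ∧
  (∀ a b c, ε a (b + c) = ε a b * ε a c) ∧
  (∀ a b c, ε (a + b) c = ε a c * ε b c)

/-- `(V, G, br, α)` is a color Hom-Lie algebra with bicharacter `ε`:
the bracket respects the grading `G`, `α` is even, the bracket is
`ε`-skew-symmetric on homogeneous elements, and the `ε`-Hom-Jacobi
identity holds on homogeneous elements. -/
def IsColorHomLie (ε : Γ → Γ → K) (G : Γ → Submodule K V)
    (br : V →ₗ[K] V →ₗ[K] V) (α : V →ₗ[K] V) : Prop :=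
  (∀ a b, ∀ x ∈ G a, ∀ y ∈ G b, br x y ∈ G (a + b)) ∧
  (∀ a, ∀ x ∈ G a, α x ∈ G a) ∧
  (∀ a b, ∀ x ∈ G a, ∀ y ∈ G b, br x y = -(ε a b) • br y x) ∧
  (∀ a b c, ∀ x ∈ G a, ∀ y ∈ G b, ∀ z ∈ G c,
    ε c a • br (α x) (br y z) + ε a b • br (α y) (br z x)
      + ε b c • br (α z) (br x y) = 0)

/-- Multiplicativity: `α` is a morphism for the bracket. -/
def IsMult (br : V →ₗ[K] V →ₗ[K] V) (α : V →ₗ[K] V) : Prop :=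
  ∀ x y, α (br x y) = br (α x) (α y)

/-- Quadratic color Hom-Lie algebra: a color Hom-Lie algebra with a
nondegenerate, `ε`-symmetric, invariant bilinear form `B` for which `α`
is `B`-symmetric. -/
def IsQuadColorHomLie (ε : Γ → Γ → K) (G : Γ → Submodule K V)
    (br : V →ₗ[K] V →ₗ[K] V) (α : V →ₗ[K] V)
    (B : V →ₗ[K] V →ₗ[K] K) : Prop :=
  IsColorHomLie ε G br α ∧
  (∀ x, (∀ y, B x y = 0) → x = 0) ∧
  (∀ a b, ∀ x ∈ G a, ∀ y ∈ G b, B x y = ε a b * B y x) ∧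
  (∀ x y z, B (br x y) z = B x (br y z)) ∧
  (∀ x y, B (α x) y = B x (α y))

variable {M : Type*} [AddCommGroup M] [Module K M]

/-- The dual map `ρ̃(x)(f) = −ε(x,f) f∘ρ(x)` is a representation of `g` on
`(M*, β̃)` if and only if
`ρ(x)∘ρ(α y) − ε(x,y) ρ(y)∘ρ(α x) = β∘ρ([x,y])` on homogeneous elements. -/
theorem stmt13 (ε : Γ → Γ → K) (hε : IsBicharacter ε)
    (G : Γ → Submodule K V) (br : V →ₗ[K] V →ₗ[K] V) (α : V →ₗ[K] V)
    (h : IsColorHomLie ε G br α)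
    (GM : Γ → Submodule K M) (β : M →ₗ[K] M) (ρ : V →ₗ[K] M →ₗ[K] M)
    (hρgr : ∀ a b, ∀ x ∈ G a, ∀ m ∈ GM b, ρ x m ∈ GM (a + b))
    (hβeven : ∀ b, ∀ m ∈ GM b, β m ∈ GM b)
    (hrep : ∀ a b, ∀ x ∈ G a, ∀ y ∈ G b, ∀ m,
      ρ (br x y) (β m) = ρ (α x) (ρ y m) - ε a b • ρ (α y) (ρ x m))
    (GD : Γ → Submodule K (Module.Dual K M))
    (hsep : ∀ m : M, (∀ c, ∀ f ∈ GD c, f m = 0) → m = 0)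
    (ρd : V →ₗ[K] Module.Dual K M →ₗ[K] Module.Dual K M)
    (hρdgr : ∀ a c, ∀ x ∈ G a, ∀ f ∈ GD c, ρd x f ∈ GD (a + c))
    (hρd : ∀ a c, ∀ x ∈ G a, ∀ f ∈ GD c, ∀ m, ρd x f m = -(ε a c) * f (ρ x m))
    (βd : Module.Dual K M →ₗ[K] Module.Dual K M)
    (hβdeven : ∀ c, ∀ f ∈ GD c, βd f ∈ GD c)
    (hβd : ∀ f m, βd f m = f (β m)) :
    (∀ a b c, ∀ x ∈ G a, ∀ y ∈ G b, ∀ f ∈ GD c, ∀ m,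
        ρd (br x y) (βd f) m
          = ρd (α x) (ρd y f) m - ε a b * ρd (α y) (ρd x f) m) ↔
      (∀ a b, ∀ x ∈ G a, ∀ y ∈ G b, ∀ m,
        ρ x (ρ (α y) m) - ε a b • ρ y (ρ (α x) m) = β (ρ (br x y) m)) := by
  obtain ⟨hsym, hadd1, hadd2⟩ := hε
  have hne : ∀ a b, ε a b ≠ 0 := by
    intro a b hz
    have h1 := hsym a b
    rw [hz, zero_mul] at h1
    exact zero_ne_one h1
  constructor
  · intro H a b x hx y hy m
    have key : ∀ c, ∀ f ∈ GD c,
        f (ρ x (ρ (α y) m) - ε a b • ρ y (ρ (α x) m) - β (ρ (br x y) m)) = 0 := by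
      intro c f hf
      have E := H a b c x hx y hy f hf m
      rw [hρd (a+b) c _ (h.1 a b x hx y hy) _ (hβdeven c f hf), hβd,
          hρd a (b+c) _ (h.2.1 a x hx) _ (hρdgr b c y hy f hf),
          hρd b c y hy f hf,
          hρd b (a+c) _ (h.2.1 b y hy) _ (hρdgr a c x hx f hf),
          hρd a c x hx f hf] at E
      simp only [hadd1, hadd2] at E
      have h1 := hsym a b
      have hz : (ε a c * ε b c) *
          (f (ρ x (ρ (α y) m)) - ε a b * f (ρ y (ρ (α x) m))
            - f (β (ρ (br x y) m))) = 0 := by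
        linear_combination E - (ε a c * ε b c * f (ρ x (ρ (α y) m))) * h1
      have hnz : ε a c * ε b c ≠ 0 := mul_ne_zero (hne a c) (hne b c)
      have := (mul_eq_zero.mp hz).resolve_left hnz
      simpa only [map_sub, map_smul, smul_eq_mul] using this
    have h0 := hsep _ (fun c f hf => key c f hf)
    exact sub_eq_zero.mp h0
  · intro H a b c x hx y hy f hf m
    have hF := congrArg f (H a b x hx y hy m)
    rw [map_sub, map_smul, smul_eq_mul] at hF
    rw [hρd (a+b) c _ (h.1 a b x hx y hy) _ (hβdeven c f hf), hβd,
        hρd a (b+c) _ (h.2.1 a x hx) _ (hρdgr b c y hy f hf),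
        hρd b c y hy f hf,
        hρd b (a+c) _ (h.2.1 b y hy) _ (hρdgr a c x hx f hf),
        hρd a c x hx f hf]
    simp only [hadd1, hadd2]
    have h1 := hsym a b
    linear_combination (ε a c * ε b c) * hF
      + (ε a c * ε b c * f (ρ x (ρ (α y) m))) * h1
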